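/- arXiv:1911.05401 — 3 statements merged into one kernel-verified Lean document; each statement's English description precedes it below -/
import Mathlib

section
/- For any differentiable path 𝐳: [0,1] → ℝ^n with derivative 𝐯(t) = d𝐳/dt, 𝐳(0) = 𝐱 and 𝐳(1) = 𝐲, the integral ∫₀¹ ‖𝐯(t)‖_tr dt is at least d_tr(𝐱, 𝐲), where d_tr(𝐱, 𝐲) = max{ max_{1≤i<j≤n} |(𝐱_i−𝐲_i)−(𝐱_j−𝐲_j)|, max_{1≤i≤n} |𝐱_i−𝐲_i| }. -/
noncomputable def tropNorm {n : ℕ} (a : Fin n → ℝ) : ℝ :=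
  Finset.fold max 0 a Finset.univ - Finset.fold min 0 a Finset.univ

lemma foldmax_nonneg {n : ℕ} (a : Fin n → ℝ) :
    (0:ℝ) ≤ Finset.fold max 0 a Finset.univ :=
  Finset.le_fold_max _ |>.2 (Or.inl le_rfl)

lemma foldmin_nonpos {n : ℕ} (a : Fin n → ℝ) :
    Finset.fold min 0 a Finset.univ ≤ (0:ℝ) :=
  Finset.fold_min_le _ |>.2 (Or.inl le_rfl)

lemma le_foldmax {n : ℕ} (a : Fin n → ℝ) (i : Fin n) :
    a i ≤ Finset.fold max 0 a Finset.univ :=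
  Finset.le_fold_max _ |>.2 (Or.inr ⟨i, Finset.mem_univ i, le_rfl⟩)

lemma foldmin_le {n : ℕ} (a : Fin n → ℝ) (i : Fin n) :
    Finset.fold min 0 a Finset.univ ≤ a i :=
  Finset.fold_min_le _ |>.2 (Or.inr ⟨i, Finset.mem_univ i, le_rfl⟩)

lemma tropNorm_nonneg {n : ℕ} (a : Fin n → ℝ) : 0 ≤ tropNorm a := by
  have := foldmax_nonneg a; have := foldmin_nonpos a
  unfold tropNorm; linarith

lemma abs_apply_le_tropNorm {n : ℕ} (a : Fin n → ℝ) (i : Fin n) :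
    |a i| ≤ tropNorm a := by
  have h1 := le_foldmax a i
  have h2 := foldmin_le a i
  have h3 := foldmax_nonneg a
  have h4 := foldmin_nonpos a
  unfold tropNorm
  rw [abs_le]; constructor <;> linarith

lemma abs_sub_le_tropNorm {n : ℕ} (a : Fin n → ℝ) (i j : Fin n) :
    |a i - a j| ≤ tropNorm a := by
  have h1 := le_foldmax a i
  have h2 := foldmin_le a i
  have h3 := le_foldmax a j
  have h4 := foldmin_le a j
  unfold tropNorm
  rw [abs_le]; constructor <;> linarith

lemma continuous_foldmax {n : ℕ} (s : Finset (Fin n)) :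
    Continuous fun a : Fin n → ℝ => Finset.fold max 0 a s := by
  induction s using Finset.induction_on with
  | empty => simpa using continuous_const
  | insert _ _ h ih =>
      simp only [Finset.fold_insert h]
      exact (continuous_apply _).max ih

lemma continuous_foldmin {n : ℕ} (s : Finset (Fin n)) :
    Continuous fun a : Fin n → ℝ => Finset.fold min 0 a s := by
  induction s using Finset.induction_on with
  | empty => simpa using continuous_const
  | insert _ _ h ih =>
      simp only [Finset.fold_insert h]
      exact (continuous_apply _).min ih

lemma continuous_tropNorm {n : ℕ} : Continuous (tropNorm (n := n)) :=
  (continuous_foldmax _).sub (continuous_foldmin _)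

theorem tropical_length_ge_dtr {n : ℕ} (x y : Fin n → ℝ)
    (z v : ℝ → Fin n → ℝ)
    (hderiv : ∀ t ∈ Set.Icc (0:ℝ) 1, HasDerivAt z (v t) t)
    (hv : ContinuousOn v (Set.Icc (0:ℝ) 1))
    (h0 : z 0 = x) (h1 : z 1 = y) :
    sSup { r : ℝ |
        (∃ i j : Fin n, i < j ∧ r = |(x i - y i) - (x j - y j)|) ∨
        (∃ i : Fin n, r = |x i - y i|) }
      ≤ ∫ t in (0:ℝ)..1, tropNorm (v t) := by
  have huIcc : Set.uIcc (0:ℝ) 1 = Set.Icc 0 1 := Set.uIcc_of_le zero_le_one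
  have hvcomp : ∀ i : Fin n, ContinuousOn (fun t => v t i) (Set.Icc (0:ℝ) 1) :=
    fun i => (continuous_apply i).comp_continuousOn hv
  have hint : ∀ i : Fin n, IntervalIntegrable (fun t => v t i) MeasureTheory.volume 0 1 :=
    fun i => ((hvcomp i).mono huIcc.subset).intervalIntegrable
  have htropint : IntervalIntegrable (fun t => tropNorm (v t)) MeasureTheory.volume 0 1 :=
    ((continuous_tropNorm.comp_continuousOn hv).mono huIcc.subset).intervalIntegrable
  -- FTC componentwise
  have hftc : ∀ i : Fin n, (∫ t in (0:ℝ)..1, v t i) = y i - x i := by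
    intro i
    have hd : ∀ t ∈ Set.uIcc (0:ℝ) 1, HasDerivAt (fun s => z s i) (v t i) t := by
      intro t ht
      have h := (hderiv t (huIcc ▸ ht)).hasFDerivAt
      have h2 := (ContinuousLinearMap.proj (R := ℝ) (φ := fun _ : Fin n => ℝ) i).hasFDerivAt.comp t h
      have h3 := h2.hasDerivAt
      exact hasDerivAt_pi.1 (hderiv t (huIcc ▸ ht)) i
    have := intervalIntegral.integral_eq_sub_of_hasDerivAt hd (hint i)
    rw [this, h0, h1]
  have htrop_nonneg : (0:ℝ) ≤ ∫ t in (0:ℝ)..1, tropNorm (v t) :=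
    intervalIntegral.integral_nonneg zero_le_one (fun t _ => tropNorm_nonneg _)
  apply Real.sSup_le _ htrop_nonneg
  rintro r (⟨i, j, _, rfl⟩ | ⟨i, rfl⟩)
  · have hkey : |(x i - y i) - (x j - y j)| = |∫ t in (0:ℝ)..1, (v t i - v t j)| := by
      rw [intervalIntegral.integral_sub (hint i) (hint j), hftc i, hftc j]
      rw [show (x i - y i) - (x j - y j) = -((y i - x i) - (y j - x j)) by ring, abs_neg]
    rw [hkey]
    calc |∫ t in (0:ℝ)..1, (v t i - v t j)| ≤ ∫ t in (0:ℝ)..1, |v t i - v t j| :=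
          intervalIntegral.abs_integral_le_integral_abs zero_le_one
      _ ≤ ∫ t in (0:ℝ)..1, tropNorm (v t) := by
          apply intervalIntegral.integral_mono_on zero_le_one ((hint i).sub (hint j)).abs htropint
          intro t _
          exact abs_sub_le_tropNorm (v t) i j
  · have hkey : |x i - y i| = |∫ t in (0:ℝ)..1, v t i| := by
      rw [hftc i, abs_sub_comm]
    rw [hkey]
    calc |∫ t in (0:ℝ)..1, v t i| ≤ ∫ t in (0:ℝ)..1, |v t i| :=
          intervalIntegral.abs_integral_le_integral_abs zero_le_one
      _ ≤ ∫ t in (0:ℝ)..1, tropNorm (v t) := by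
          apply intervalIntegral.integral_mono_on zero_le_one (hint i).abs htropint
          intro t _
          exact abs_apply_le_tropNorm (v t) i
end

section
/- For each 𝐚, 𝐛 ∈ ℝ^n, ∑_{i=1}^n b_i a_i ≤ ζ(𝐛) · ‖𝐚‖_tr, where ζ(𝐛) = max_{S⊆{1,…,n}} |∑_{i∈S} b_i| and ‖𝐚‖_tr is the tropical norm. -/
noncomputable def zeta {n : ℕ} (b : Fin n → ℝ) : ℝ :=
  Finset.univ.powerset.sup' ⟨∅, Finset.empty_mem_powerset _⟩
    (fun S => |∑ i ∈ S, b i|)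

theorem inner_le_zeta_mul_tropNorm {n : ℕ} (a b : Fin n → ℝ) :
    ∑ i, b i * a i ≤ zeta b * tropNorm a := by
  set M := Finset.fold max 0 a Finset.univ with hM
  set m := Finset.fold min 0 a Finset.univ with hm
  have hM0 : 0 ≤ M := (Finset.le_fold_max _).mpr (Or.inl le_rfl)
  have hm0 : m ≤ 0 := (Finset.fold_min_le _).mpr (Or.inl le_rfl)
  have haM : ∀ i : Fin n, a i ≤ M := fun i =>
    (Finset.le_fold_max _).mpr (Or.inr ⟨i, Finset.mem_univ i, le_rfl⟩)
  have hma : ∀ i : Fin n, m ≤ a i := fun i =>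
    (Finset.fold_min_le _).mpr (Or.inr ⟨i, Finset.mem_univ i, le_rfl⟩)
  set P := Finset.univ.filter (fun i : Fin n => 0 ≤ b i) with hP
  set N := Finset.univ.filter (fun i : Fin n => ¬ 0 ≤ b i) with hN
  have hzP : |∑ i ∈ P, b i| ≤ zeta b := by
    unfold zeta
    exact Finset.le_sup' (fun S => |∑ i ∈ S, b i|) (Finset.mem_powerset.mpr (Finset.filter_subset _ Finset.univ))
  have hzN : |∑ i ∈ N, b i| ≤ zeta b := by
    unfold zeta
    exact Finset.le_sup' (fun S => |∑ i ∈ S, b i|) (Finset.mem_powerset.mpr (Finset.filter_subset _ Finset.univ))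
  have hsplit : ∑ i, b i * a i = ∑ i ∈ P, b i * a i + ∑ i ∈ N, b i * a i :=
    (Finset.sum_filter_add_sum_filter_not _ _ _).symm
  have hPsum : ∑ i ∈ P, b i * a i ≤ (∑ i ∈ P, b i) * M := by
    rw [Finset.sum_mul]
    refine Finset.sum_le_sum fun i hi => ?_
    exact mul_le_mul_of_nonneg_left (haM i) (Finset.mem_filter.mp hi).2
  have hNsum : ∑ i ∈ N, b i * a i ≤ (∑ i ∈ N, b i) * m := by
    rw [Finset.sum_mul]
    refine Finset.sum_le_sum fun i hi => ?_
    have hb : b i ≤ 0 := le_of_not_ge (Finset.mem_filter.mp hi).2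
    exact mul_le_mul_of_nonpos_left (hma i) hb
  have hPnn : 0 ≤ ∑ i ∈ P, b i :=
    Finset.sum_nonneg fun i hi => (Finset.mem_filter.mp hi).2
  have hNnp : ∑ i ∈ N, b i ≤ 0 :=
    Finset.sum_nonpos fun i hi => le_of_not_ge (Finset.mem_filter.mp hi).2
  have hPz : ∑ i ∈ P, b i ≤ zeta b := (le_abs_self _).trans hzP
  have hNz : -(∑ i ∈ N, b i) ≤ zeta b := (neg_le_abs _).trans hzN
  have h1 : (∑ i ∈ P, b i) * M ≤ zeta b * M :=
    mul_le_mul_of_nonneg_right hPz hM0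
  have h2 : (∑ i ∈ N, b i) * m ≤ zeta b * (-m) := by nlinarith
  rw [hsplit]
  have : zeta b * M + zeta b * (-m) = zeta b * tropNorm a := by
    unfold tropNorm; rw [← hM, ← hm]; ring
  linarith
end

section
/- If ζ(𝐛) ≤ 1, then sup_{𝐚∈ℝ^n} ( ∑_{i=1}^n b_i a_i − ‖𝐚‖_tr ) = 0; i.e., the Hamiltonian H(𝐛) for p = 1 vanishes when ζ(𝐛) ≤ 1. -/
lemma zeta_bound {n : ℕ} (b : Fin n → ℝ) (S : Finset (Fin n)) :
    |∑ i ∈ S, b i| ≤ zeta b := by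
  unfold zeta
  exact Finset.le_sup' (fun T => |∑ i ∈ T, b i|) (Finset.mem_powerset.2 (Finset.subset_univ S))

theorem hamiltonian_p1_zero {n : ℕ} (b : Fin n → ℝ) (hb : zeta b ≤ 1) :
    sSup { r : ℝ | ∃ a : Fin n → ℝ, r = ∑ i, b i * a i - tropNorm a } = 0 := by
  apply IsGreatest.csSup_eq
  constructor
  · refine ⟨fun _ => 0, ?_⟩
    simp [tropNorm, Finset.fold_const]
  · rintro r ⟨a, rfl⟩
    set M := Finset.fold max 0 a Finset.univ with hM
    set m := Finset.fold min 0 a Finset.univ with hm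
    have hM0 : 0 ≤ M := le_of_eq_of_le rfl ((Finset.le_fold_max _).2 (Or.inl le_rfl))
    have hm0 : m ≤ 0 := (Finset.fold_min_le _).2 (Or.inl le_rfl)
    have haM : ∀ i, a i ≤ M := fun i =>
      ((Finset.fold_max_le _).1 le_rfl).2 i (Finset.mem_univ i)
    have hma : ∀ i, m ≤ a i := fun i =>
      ((Finset.le_fold_min _).1 le_rfl).2 i (Finset.mem_univ i)
    -- split indices by sign of b
    set S : Finset (Fin n) := Finset.univ.filter (fun i => 0 ≤ b i) with hS
    have hsplit : ∑ i, b i * a i = ∑ i ∈ S, b i * a i + ∑ i ∈ Sᶜ, b i * a i :=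
      (Finset.sum_add_sum_compl S _).symm
    have h1 : ∑ i ∈ S, b i * a i ≤ M * ∑ i ∈ S, b i := by
      rw [Finset.mul_sum]
      apply Finset.sum_le_sum
      intro i hi
      have hbi : 0 ≤ b i := (Finset.mem_filter.1 hi).2
      calc b i * a i ≤ b i * M := by nlinarith [haM i]
        _ = M * b i := mul_comm _ _
    have h2 : ∑ i ∈ Sᶜ, b i * a i ≤ m * ∑ i ∈ Sᶜ, b i := by
      rw [Finset.mul_sum]
      apply Finset.sum_le_sum
      intro i hi
      have hbi : b i ≤ 0 := by
        have := Finset.mem_compl.1 hi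
        simp only [hS, Finset.mem_filter, Finset.mem_univ, true_and, not_le] at this
        linarith
      calc b i * a i ≤ b i * m := by nlinarith [hma i]
        _ = m * b i := mul_comm _ _
    have hBS : ∑ i ∈ S, b i ≤ 1 := le_trans (le_abs_self _) (le_trans (zeta_bound b S) hb)
    have hBS0 : 0 ≤ ∑ i ∈ S, b i :=
      Finset.sum_nonneg fun i hi => (Finset.mem_filter.1 hi).2
    have hBC : -1 ≤ ∑ i ∈ Sᶜ, b i := by
      have := le_trans (zeta_bound b Sᶜ) hb
      have := abs_le.1 (le_trans (zeta_bound b Sᶜ) hb)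
      linarith [this.1]
    have hBC0 : ∑ i ∈ Sᶜ, b i ≤ 0 := by
      apply Finset.sum_nonpos
      intro i hi
      have := Finset.mem_compl.1 hi
      simp only [hS, Finset.mem_filter, Finset.mem_univ, true_and, not_le] at this
      linarith
    have hMb : M * ∑ i ∈ S, b i ≤ M := by nlinarith
    have hmb : m * ∑ i ∈ Sᶜ, b i ≤ -m := by nlinarith
    have : ∑ i, b i * a i ≤ M - m := by
      rw [hsplit]; linarith
    simp only [tropNorm, ← hM, ← hm]
    linarith
end
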